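/- Let R ∈ (0, +∞], let λ, μ : [0,R) → ℝ be smooth positive functions, let H > 0 be a constant, and define c(r) = r⁻²∫₀^r s·λ(s)²·μ(s) ds, g₁(r) = 2Hr·c(r)/μ(r)² and g₂(r) = 2Hr·c(r)/(λ(r)·μ(r)) for r ∈ (0,R) (with g₁(0) = g₂(0) = 0). Suppose there is ρ_H ∈ (0,R) such that g₂(r) < 1 for all r ∈ [0, ρ_H), g₂(ρ_H) = 1 and g₂′(ρ_H) = 0. Then the improper integral ∫₀^{ρ_H} g₁(r)/√(1 − g₂(r)²) dr diverges to +∞. -/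

import Mathlib

open MeasureTheory Filter Topology

/-- `c(r) = r⁻² ∫₀^r s·λ(s)²·μ(s) ds`. -/
noncomputable def cProfile (lam mu : ℝ → ℝ) (r : ℝ) : ℝ :=
  (r ^ 2)⁻¹ * ∫ s in (0:ℝ)..r, s * lam s ^ 2 * mu s

/-- `g₁(r) = 2Hr·c(r)/μ(r)²`. -/
noncomputable def g1 (lam mu : ℝ → ℝ) (H r : ℝ) : ℝ :=
  2 * H * r * cProfile lam mu r / (mu r) ^ 2

/-- `g₂(r) = 2Hr·c(r)/(λ(r)·μ(r))`. -/
noncomputable def g2 (lam mu : ℝ → ℝ) (H r : ℝ) : ℝ :=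
  2 * H * r * cProfile lam mu r / (lam r * mu r)

/-- If the causality function `g₂` reaches the value `1` at a radius `ρ_H ∈ (0,R)` with
`g₂′(ρ_H) = 0`, then the profile height integral `∫₀^{ρ_H} g₁/√(1-g₂²)` diverges to `+∞`
(the rotational `H`-graph is a complete non-entire `H`-cigar). -/
theorem H_cigar_profile_integral_diverges
    (S : Set ℝ) (hS : S = Set.Ici 0 ∨ ∃ R : ℝ, 0 < R ∧ S = Set.Ico 0 R)
    (lam mu : ℝ → ℝ)
    (hlam : ContDiffOn ℝ (⊤ : ℕ∞) lam S) (hmu : ContDiffOn ℝ (⊤ : ℕ∞) mu S)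
    (hlampos : ∀ r ∈ S, 0 < lam r) (hmupos : ∀ r ∈ S, 0 < mu r)
    (H : ℝ) (hH : 0 < H)
    (ρH : ℝ) (hρH : ρH ∈ S) (hρHpos : 0 < ρH)
    (hlt : ∀ r : ℝ, 0 ≤ r → r < ρH → g2 lam mu H r < 1)
    (heq : g2 lam mu H ρH = 1)
    (hder : deriv (g2 lam mu H) ρH = 0) :
    (∫⁻ r in Set.Ioo 0 ρH,
        ENNReal.ofReal (g1 lam mu H r / Real.sqrt (1 - g2 lam mu H r ^ 2))) = ⊤ := by
  classical
  -- Structure of the domain `S`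
  have hIccS : ∀ r ∈ S, Set.Icc 0 r ⊆ S := by
    rcases hS with rfl | ⟨R, hR, rfl⟩
    · exact fun r _ x hx => hx.1
    · exact fun r hr x hx => ⟨hx.1, lt_of_le_of_lt hx.2 hr.2⟩
  have hUopen : IsOpen (interior S) := isOpen_interior
  have hUS : interior S ⊆ S := interior_subset
  have hρU : ρH ∈ interior S := by
    rcases hS with rfl | ⟨R, hR, rfl⟩
    · rw [interior_Ici]; exact hρHpos
    · rw [interior_Ico]; exact ⟨hρHpos, hρH.2⟩
  have hUpos : ∀ r ∈ interior S, 0 < r := by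
    rcases hS with rfl | ⟨R, hR, rfl⟩
    · rw [interior_Ici]; exact fun r hr => hr
    · rw [interior_Ico]; exact fun r hr => hr.1
  -- The integrand of `cProfile`
  set h : ℝ → ℝ := fun s => s * lam s ^ 2 * mu s with hhdef
  have hlamC : ContinuousOn lam S := hlam.continuousOn
  have hmuC : ContinuousOn mu S := hmu.continuousOn
  have hhC : ContinuousOn h S :=
    (continuousOn_id.mul (hlamC.pow 2)).mul hmuC
  set F : ℝ → ℝ := fun r => ∫ s in (0:ℝ)..r, h s with hFdef
  -- FTC: `F` has derivative `h` on `interior S`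
  have hF : ∀ r ∈ interior S, HasDerivAt F (h r) r := by
    intro r hr
    have hrS : r ∈ S := hUS hr
    have hrpos : 0 < r := hUpos r hr
    have hint : IntervalIntegrable h volume 0 r := by
      apply ContinuousOn.intervalIntegrable
      rw [Set.uIcc_of_le hrpos.le]
      exact hhC.mono (hIccS r hrS)
    have hmeas : StronglyMeasurableAtFilter h (𝓝 r) volume :=
      (hhC.mono hUS).stronglyMeasurableAtFilter hUopen r hr
    have hcontat : ContinuousAt h r :=
      (hhC.mono hUS).continuousAt (hUopen.mem_nhds hr)
    exact intervalIntegral.integral_hasDerivAt_right hint hmeas hcontat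
  -- smoothness of lam and mu of order 2 and 1
  have hle1 : (1 : WithTop ℕ∞) ≤ ((⊤ : ℕ∞) : WithTop ℕ∞) := by
    exact (WithTop.coe_le_coe.2 le_top : ((1:ℕ∞) : WithTop ℕ∞) ≤ _)
  have hle2 : (2 : WithTop ℕ∞) ≤ ((⊤ : ℕ∞) : WithTop ℕ∞) := by
    exact (WithTop.coe_le_coe.2 le_top : ((2:ℕ∞) : WithTop ℕ∞) ≤ _)
  have hlam2 : ContDiffOn ℝ 2 lam (interior S) := (hlam.of_le hle2).mono hUS
  have hmu2 : ContDiffOn ℝ 2 mu (interior S) := (hmu.of_le hle2).mono hUS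
  have hh1 : ContDiffOn ℝ 1 h (interior S) :=
    (contDiffOn_id.mul (((hlam.of_le hle1).mono hUS).pow 2)).mul
      ((hmu.of_le hle1).mono hUS)
  -- `F` is C² on `interior S`
  have hF2 : ContDiffOn ℝ 2 F (interior S) := by
    rw [show (2 : WithTop ℕ∞) = 1 + 1 by norm_num,
      contDiffOn_succ_iff_deriv_of_isOpen hUopen]
    refine ⟨fun r hr => ((hF r hr).differentiableAt).differentiableWithinAt, by simp, ?_⟩
    exact hh1.congr fun r hr => (hF r hr).deriv
  -- `g2` is C² on `interior S`
  have hg2U : ContDiffOn ℝ 2 (g2 lam mu H) (interior S) := by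
    have : ContDiffOn ℝ 2
        (fun r => 2 * H * r * ((r ^ 2)⁻¹ * F r) / (lam r * mu r)) (interior S) := by
      apply ContDiffOn.div
      · exact ((contDiffOn_const.mul contDiffOn_id).mul
          (((contDiffOn_id.pow 2).inv fun r hr =>
            pow_ne_zero 2 (hUpos r hr).ne').mul hF2))
      · exact hlam2.mul hmu2
      · exact fun r hr => (mul_pos (hlampos r (hUS hr)) (hmupos r (hUS hr))).ne'
    exact this
  -- continuity / derivative facts at `ρH`
  have hlρ : 0 < lam ρH := hlampos ρH hρH
  have hmρ : 0 < mu ρH := hmupos ρH hρH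
  have hg2diff : DifferentiableOn ℝ (g2 lam mu H) (interior S) :=
    hg2U.differentiableOn (by norm_num)
  have hg2has : ∀ x ∈ interior S, HasDerivAt (g2 lam mu H) (deriv (g2 lam mu H) x) x := by
    intro x hx
    exact ((hg2diff x hx).differentiableAt (hUopen.mem_nhds hx)).hasDerivAt
  have hderiv1 : ContDiffOn ℝ 1 (deriv (g2 lam mu H)) (interior S) := by
    have := (contDiffOn_succ_iff_deriv_of_isOpen hUopen).1
      (by rw [show (1 : WithTop ℕ∞) + 1 = 2 by norm_num]; exact hg2U)
    exact this.2.2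
  have hsecond : DifferentiableAt ℝ (deriv (g2 lam mu H)) ρH :=
    ((hderiv1.differentiableOn one_ne_zero) ρH hρU).differentiableAt (hUopen.mem_nhds hρU)
  -- second-order bound constant
  set K : ℝ := deriv (deriv (g2 lam mu H)) ρH with hKdef
  set C : ℝ := |K| + 1 with hCdef
  have hCpos : 0 < C := by positivity
  -- the derivative bound near ρH
  have hdbound : ∀ᶠ y in nhds ρH, |deriv (g2 lam mu H) y| ≤ C * |y - ρH| := by
    have hKd := hsecond.hasDerivAt
    rw [hasDerivAt_iff_isLittleO] at hKd
    have := hKd.def one_pos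
    filter_upwards [this] with y hy
    rw [hder] at hy
    simp only [Real.norm_eq_abs, smul_eq_mul, sub_zero, one_mul] at hy
    have : |deriv (g2 lam mu H) y| ≤ |deriv (g2 lam mu H) y - (y - ρH) * K| + |(y - ρH) * K| := by
      have := abs_add_le (deriv (g2 lam mu H) y - (y - ρH) * K) ((y - ρH) * K)
      simpa using this
    calc |deriv (g2 lam mu H) y| ≤ |y - ρH| + |(y - ρH) * K| := by linarith
      _ = |y - ρH| + |K| * |y - ρH| := by rw [abs_mul]; ring
      _ = C * |y - ρH| := by rw [hCdef]; ring
  -- `g1` is continuous and positive at `ρH`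
  have hFc : ContinuousAt F ρH := (hF ρH hρU).continuousAt
  have hmucA : ContinuousAt mu ρH := hmuC.continuousAt
    (mem_of_superset (hUopen.mem_nhds hρU) hUS)
  have hg1cont : ContinuousAt (g1 lam mu H) ρH := by
    have : ContinuousAt (fun r => 2 * H * r * ((r ^ 2)⁻¹ * F r) / (mu r) ^ 2) ρH := by
      apply ContinuousAt.div
      · exact (continuousAt_const.mul continuousAt_id).mul
          (((continuousAt_id.pow 2).inv₀ (pow_ne_zero 2 hρHpos.ne')).mul hFc)
      · exact hmucA.pow 2
      · exact pow_ne_zero 2 hmρ.ne'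
    exact this
  have hg1val : g1 lam mu H ρH = lam ρH / mu ρH := by
    have hne : lam ρH * mu ρH ≠ 0 := (mul_pos hlρ hmρ).ne'
    have heq' : 2 * H * ρH * cProfile lam mu ρH = lam ρH * mu ρH := by
      have := heq
      unfold g2 at this
      rwa [div_eq_one_iff_eq hne] at this
    unfold g1
    rw [heq']
    field_simp
  have hg1pos : 0 < g1 lam mu H ρH := by rw [hg1val]; positivity
  set m : ℝ := g1 lam mu H ρH / 2 with hmdef
  have hmpos : 0 < m := by positivity
  have hg1ev : ∀ᶠ y in nhds ρH, m < g1 lam mu H y :=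
    hg1cont.eventually (eventually_gt_nhds (by rw [hmdef]; linarith))
  -- `g2` is continuous at `ρH` with value 1, hence eventually positive
  have hg2cont : ContinuousAt (g2 lam mu H) ρH :=
    ((hg2diff ρH hρU).differentiableAt (hUopen.mem_nhds hρU)).continuousAt
  have hg2ev : ∀ᶠ y in nhds ρH, 0 < g2 lam mu H y :=
    hg2cont.eventually (eventually_gt_nhds (by rw [heq]; norm_num))
  -- extract δ
  have hall : ∀ᶠ y in nhds ρH, y ∈ interior S ∧ |deriv (g2 lam mu H) y| ≤ C * |y - ρH| ∧
      m < g1 lam mu H y ∧ 0 < g2 lam mu H y := by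
    filter_upwards [hUopen.mem_nhds hρU, hdbound, hg1ev, hg2ev] with y h1 h2 h3 h4
    exact ⟨h1, h2, h3, h4⟩
  rw [Metric.eventually_nhds_iff] at hall
  obtain ⟨δ₀, hδ₀pos, hδ₀⟩ := hall
  set δ : ℝ := min (δ₀ / 2) (ρH / 2) with hδdef
  have hδpos : 0 < δ := lt_min (by linarith) (by linarith)
  have hδlt : δ < δ₀ := lt_of_le_of_lt (min_le_left _ _) (by linarith)
  set a : ℝ := ρH - δ with hadef
  have hapos : 0 < a := by
    have : δ ≤ ρH / 2 := min_le_right _ _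
    rw [hadef]; linarith
  have haρ : a < ρH := by rw [hadef]; linarith
  -- properties on the interval (including ρH itself)
  have hball : ∀ y : ℝ, a ≤ y → y ≤ ρH → y ∈ interior S ∧
      |deriv (g2 lam mu H) y| ≤ C * |y - ρH| ∧ m < g1 lam mu H y ∧ 0 < g2 lam mu H y := by
    intro y h1 h2
    apply hδ₀
    rw [Real.dist_eq, abs_sub_lt_iff]
    constructor <;> [linarith; (rw [hadef] at h1; linarith)]
  -- key Taylor-type bound via MVT
  have hkey : ∀ r ∈ Set.Ioo a ρH, 1 - g2 lam mu H r ≤ C * (ρH - r) ^ 2 := by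
    intro r hr
    have hrρ : r < ρH := hr.2
    have hcont : ContinuousOn (g2 lam mu H) (Set.Icc r ρH) := by
      intro x hx
      exact ((hg2has x (hball x (le_trans hr.1.le hx.1) hx.2).1).continuousAt).continuousWithinAt
    have hdiffIoo : ∀ x ∈ Set.Ioo r ρH, HasDerivAt (g2 lam mu H) (deriv (g2 lam mu H) x) x :=
      fun x hx => hg2has x (hball x (le_trans hr.1.le hx.1.le) hx.2.le).1
    obtain ⟨ξ, hξ, hslope⟩ := exists_hasDerivAt_eq_slope (g2 lam mu H)
      (deriv (g2 lam mu H)) hrρ hcont hdiffIoo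
    have hξbd : |deriv (g2 lam mu H) ξ| ≤ C * (ρH - ξ) :=
      le_of_le_of_eq (hball ξ (le_trans hr.1.le hξ.1.le) hξ.2.le).2.1
        (by rw [abs_of_nonpos (sub_nonpos.2 hξ.2.le)]; ring)
    have h1 : 1 - g2 lam mu H r = deriv (g2 lam mu H) ξ * (ρH - r) := by
      rw [hslope, heq]
      exact (div_mul_cancel₀ _ (sub_ne_zero.2 hrρ.ne')).symm
    rw [h1]
    have h2 : deriv (g2 lam mu H) ξ * (ρH - r) ≤ |deriv (g2 lam mu H) ξ| * (ρH - r) :=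
      mul_le_mul_of_nonneg_right (le_abs_self _) (by linarith)
    have h3 : |deriv (g2 lam mu H) ξ| * (ρH - r) ≤ (C * (ρH - ξ)) * (ρH - r) :=
      mul_le_mul_of_nonneg_right hξbd (by linarith)
    have h4 : (C * (ρH - ξ)) * (ρH - r) ≤ C * (ρH - r) ^ 2 := by
      have hξr : ρH - ξ ≤ ρH - r := by linarith [hξ.1]
      have h5 : C * (ρH - ξ) * (ρH - r) ≤ C * (ρH - r) * (ρH - r) :=
        mul_le_mul_of_nonneg_right (mul_le_mul_of_nonneg_left hξr hCpos.le) (by linarith)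
      calc (C * (ρH - ξ)) * (ρH - r) ≤ C * (ρH - r) * (ρH - r) := h5
        _ = C * (ρH - r) ^ 2 := by ring
    linarith
  -- the pointwise lower bound on the integrand
  set c0 : ℝ := m / Real.sqrt (2 * C) with hc0def
  have hsqrt2C : 0 < Real.sqrt (2 * C) := Real.sqrt_pos.2 (by linarith)
  have hc0pos : 0 < c0 := by positivity
  have hlower : ∀ r ∈ Set.Ioo a ρH,
      c0 * (ρH - r)⁻¹ ≤ g1 lam mu H r / Real.sqrt (1 - g2 lam mu H r ^ 2) := by
    intro r hr
    have hrρ : r < ρH := hr.2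
    have hρr : 0 < ρH - r := by linarith
    have hbp := hball r hr.1.le hrρ.le
    have hb := hkey r hr
    set q : ℝ := g2 lam mu H r with hqdef
    have hg2pos : 0 < q := hbp.2.2.2
    have hg2lt : q < 1 := hlt r (by linarith [hapos, hr.1]) hrρ
    have hpos : 0 < 1 - q ^ 2 := by
      have hp := mul_pos (show (0:ℝ) < 1 - q by linarith) (show (0:ℝ) < 1 + q by linarith)
      nlinarith [hp]
    have hbound : 1 - q ^ 2 ≤ 2 * C * (ρH - r) ^ 2 := by
      have h6 : 1 - q ^ 2 = (1 - q) * (1 + q) := by ring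
      have h7 : (1 - q) * (1 + q) ≤ (1 - q) * 2 :=
        mul_le_mul_of_nonneg_left (by linarith) (by linarith)
      rw [h6]
      calc (1 - q) * (1 + q) ≤ (1 - q) * 2 := h7
        _ ≤ C * (ρH - r) ^ 2 * 2 := by linarith
        _ = 2 * C * (ρH - r) ^ 2 := by ring
    have hs1 : Real.sqrt (1 - q ^ 2) ≤ Real.sqrt (2 * C) * (ρH - r) := by
      have hss : Real.sqrt (1 - q ^ 2) ≤ Real.sqrt (2 * C * (ρH - r) ^ 2) :=
        Real.sqrt_le_sqrt hbound
      rwa [Real.sqrt_mul (by linarith : (0:ℝ) ≤ 2 * C), Real.sqrt_sq hρr.le] at hss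
    have hs0 : 0 < Real.sqrt (1 - q ^ 2) := Real.sqrt_pos.2 hpos
    have hstep : c0 * (ρH - r)⁻¹ = m / (Real.sqrt (2 * C) * (ρH - r)) := by
      rw [hc0def, ← div_eq_mul_inv, div_div]
    rw [hstep]
    apply div_le_div₀ (le_of_lt (lt_of_lt_of_le hmpos hbp.2.2.1.le)) hbp.2.2.1.le hs0 hs1
  -- divergence of the comparison integral
  have hψmeas : AEStronglyMeasurable (fun r => c0 * (ρH - r)⁻¹)
      (volume.restrict (Set.Ioo a ρH)) := by
    apply ContinuousOn.aestronglyMeasurable _ measurableSet_Ioo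
    intro x hx
    exact (continuousOn_const.mul (((continuousOn_const.sub continuousOn_id)).inv₀
      (fun y hy => by intro hc; simp only [Pi.sub_apply, id] at hc; rw [sub_eq_zero] at hc;
                      exact absurd hc.symm hy.2.ne))) x hx
  have hψtop : (∫⁻ r in Set.Ioo a ρH, ENNReal.ofReal (c0 * (ρH - r)⁻¹)) = ⊤ := by
    by_contra htop
    have hnn : 0 ≤ᵐ[volume.restrict (Set.Ioo a ρH)] fun r => c0 * (ρH - r)⁻¹ := by
      rw [Filter.EventuallyLE, ae_restrict_iff' measurableSet_Ioo]
      filter_upwards with r hr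
      have : 0 < ρH - r := by linarith [hr.2]
      positivity
    have hfin : HasFiniteIntegral (fun r => c0 * (ρH - r)⁻¹)
        (volume.restrict (Set.Ioo a ρH)) := by
      rw [hasFiniteIntegral_iff_ofReal hnn]
      exact lt_top_iff_ne_top.2 htop
    have hint : IntegrableOn (fun r => c0 * (ρH - r)⁻¹) (Set.Ioo a ρH) :=
      (⟨hψmeas, hfin⟩ : Integrable _ (volume.restrict (Set.Ioo a ρH)))
    have hint2 : IntegrableOn (fun r => (r - ρH)⁻¹) (Set.Ioo a ρH) := by
      have : IntegrableOn (fun r => (-c0⁻¹) * (c0 * (ρH - r)⁻¹)) (Set.Ioo a ρH) :=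
        hint.const_mul _
      refine this.congr_fun (fun r _ => ?_) measurableSet_Ioo
      have hc : (r - ρH)⁻¹ = -(ρH - r)⁻¹ := by
        rw [← neg_sub ρH r, inv_neg]
      rw [hc]; beta_reduce; rw [← mul_assoc, neg_mul, inv_mul_cancel₀ hc0pos.ne', neg_one_mul]
    have hint3 : IntervalIntegrable (fun r => (r - ρH)⁻¹) volume a ρH :=
      (intervalIntegrable_iff_integrableOn_Ioo_of_le haρ.le).2 hint2
    rw [intervalIntegrable_sub_inv_iff] at hint3
    rcases hint3 with h | h
    · exact absurd h haρ.ne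
    · exact h Set.right_mem_uIcc
  -- assemble
  rw [eq_top_iff]
  calc (⊤ : ENNReal) = ∫⁻ r in Set.Ioo a ρH, ENNReal.ofReal (c0 * (ρH - r)⁻¹) := hψtop.symm
    _ ≤ ∫⁻ r in Set.Ioo a ρH,
        ENNReal.ofReal (g1 lam mu H r / Real.sqrt (1 - g2 lam mu H r ^ 2)) := by
        apply lintegral_mono_ae
        rw [ae_restrict_iff' measurableSet_Ioo]
        filter_upwards with r hr
        exact ENNReal.ofReal_le_ofReal (hlower r hr)
    _ ≤ ∫⁻ r in Set.Ioo 0 ρH,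
        ENNReal.ofReal (g1 lam mu H r / Real.sqrt (1 - g2 lam mu H r ^ 2)) := by
        apply lintegral_mono'
        · refine Measure.restrict_mono (fun x hx => ?_) le_rfl
          rcases Set.mem_Ioo.1 hx with ⟨h1, h2⟩
          exact Set.mem_Ioo.2 ⟨lt_trans hapos h1, h2⟩
        · exact le_rfl
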